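/- For every k ≥ 0 the alternating minimization iterates satisfy: H^k − H^{k+1/2} ≥ (1/2)(H^k − H*) if H^k − H* > 2L₁R²/β₁, and H^k − H^{k+1/2} ≥ (β₁/(4L₁R²))(H^k − H*)² otherwise; and symmetrically H^{k+1/2} − H^{k+1} ≥ (1/2)(H^{k+1/2} − H*) if H^{k+1/2} − H* > 2L₂R²/β₂, and H^{k+1/2} − H^{k+1} ≥ (β₂/(4L₂R²))(H^{k+1/2} − H*)² otherwise. Here H^{k+1/2} = H(x₁^{k+1}, x₂^k), and when Lᵢ/βᵢ = ∞ the corresponding inequality is trivially interpreted. -/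

import Mathlib

open Set

open Filter Topology

/-- The composite objective function `H(x₁,x₂) = f(x₁,x₂) + g₁(x₁) + g₂(x₂)`. -/
noncomputable def objFun {B₁ B₂ : Type*} (f : B₁ × B₂ → ℝ) (g₁ : B₁ → ℝ) (g₂ : B₂ → ℝ)
    (x : B₁ × B₂) : ℝ :=
  f x + g₁ x.1 + g₂ x.2


section helpers

variable {E : Type*} [NormedAddCommGroup E] [NormedSpace ℝ E]
  {S : Set E} {f : E → ℝ} {Df : E →L[ℝ] ℝ} {x v : E}

lemma seg_mem' (hS : Convex ℝ S) (hx : x ∈ S) (hxv : x + v ∈ S) {t : ℝ}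
    (ht0 : 0 ≤ t) (ht1 : t ≤ 1) : x + t • v ∈ S := by
  have h : x + t • v = (1 - t) • x + t • (x + v) := by module
  rw [h]
  exact hS hx hxv (by linarith) ht0 (by ring)

lemma dirDeriv' (hS : Convex ℝ S) (hx : x ∈ S) (hxv : x + v ∈ S)
    (hf : HasFDerivWithinAt f Df S x) :
    Tendsto (fun t : ℝ => t⁻¹ * (f (x + t • v) - f x)) (𝓝[>] (0:ℝ)) (𝓝 (Df v)) := by
  have dtop : ∀ᶠ t in 𝓝[>] (0:ℝ), x + t • v ∈ S := by
    filter_upwards [Ioc_mem_nhdsGT (zero_lt_one)] with t ht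
    exact seg_mem' hS hx hxv ht.1.le ht.2
  have clim : Tendsto (fun t : ℝ => ‖t⁻¹‖) (𝓝[>] (0:ℝ)) atTop := by
    refine tendsto_inv_nhdsGT_zero.congr' ?_
    filter_upwards [self_mem_nhdsWithin] with t (ht : t ∈ Ioi (0:ℝ))
    exact (Real.norm_of_nonneg (inv_nonneg.2 ht.le)).symm
  have cdlim : Tendsto (fun t : ℝ => t⁻¹ • (t • v)) (𝓝[>] (0:ℝ)) (𝓝 v) := by
    refine tendsto_const_nhds.congr' ?_
    filter_upwards [self_mem_nhdsWithin] with t (ht : t ∈ Ioi (0:ℝ))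
    rw [smul_smul, inv_mul_cancel₀ (ne_of_gt ht), one_smul]
  have := hf.lim (l := 𝓝[>] (0:ℝ)) (c := fun t : ℝ => t⁻¹)
    (((continuous_id.smul continuous_const).tendsto' (0:ℝ) (0:E) (by simp)).mono_left
      nhdsWithin_le_nhds) dtop cdlim
  simpa [smul_eq_mul] using this

lemma dirDeriv_le' (hS : Convex ℝ S) (hx : x ∈ S) (hxv : x + v ∈ S)
    (hf : HasFDerivWithinAt f Df S x) (hconv : ConvexOn ℝ S f) :
    Df v ≤ f (x + v) - f x := by
  refine le_of_tendsto (dirDeriv' hS hx hxv hf) ?_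
  filter_upwards [Ioc_mem_nhdsGT (zero_lt_one)] with t ht
  have hpt : x + t • v = (1 - t) • x + t • (x + v) := by module
  have hc := hconv.2 hx hxv (by linarith [ht.2] : (0:ℝ) ≤ 1 - t) ht.1.le (by ring)
  rw [← hpt] at hc
  simp only [smul_eq_mul] at hc
  have h2 : f (x + t • v) - f x ≤ t * (f (x + v) - f x) := by nlinarith
  calc t⁻¹ * (f (x + t • v) - f x) ≤ t⁻¹ * (t * (f (x + v) - f x)) :=
        mul_le_mul_of_nonneg_left h2 (inv_nonneg.2 ht.1.le)
    _ = f (x + v) - f x := by rw [← mul_assoc, inv_mul_cancel₀ (ne_of_gt ht.1), one_mul]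

lemma dirDeriv_ge' (hS : Convex ℝ S) (hx : x ∈ S) (hxv : x + v ∈ S)
    (hf : HasFDerivWithinAt f Df S x) {c : ℝ}
    (hlow : ∀ t ∈ Ioc (0:ℝ) 1, c * t ≤ f (x + t • v) - f x) :
    c ≤ Df v := by
  refine ge_of_tendsto (dirDeriv' hS hx hxv hf) ?_
  filter_upwards [Ioc_mem_nhdsGT (zero_lt_one)] with t ht
  have := hlow t ht
  calc c = t⁻¹ * (c * t) := by rw [mul_comm c t, ← mul_assoc, inv_mul_cancel₀ (ne_of_gt ht.1), one_mul]
    _ ≤ t⁻¹ * (f (x + t • v) - f x) := mul_le_mul_of_nonneg_left this (inv_nonneg.2 ht.1.le)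

lemma descent_cases {C D dec : ℝ} (hC : 0 < C) (hD : 0 ≤ D)
    (hdec : ∀ t ∈ Icc (0:ℝ) 1, t * D - C * t ^ 2 ≤ dec) :
    (4 * C < D → 1 / 2 * D ≤ dec) ∧ (D ≤ 4 * C → D ^ 2 / (8 * C) ≤ dec) := by
  constructor
  · intro h
    have h1 := hdec 1 ⟨zero_le_one, le_rfl⟩
    nlinarith
  · intro h
    rcases le_or_gt D (2 * C) with h2 | h2
    · have ht : D / (2 * C) ∈ Icc (0:ℝ) 1 :=
        ⟨by positivity, by rw [div_le_one (by linarith)]; linarith⟩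
      have h1 := hdec _ ht
      rw [div_le_iff₀ (by linarith : (0:ℝ) < 8 * C)]
      have e : D / (2 * C) * D - C * (D / (2 * C)) ^ 2 = D ^ 2 / (4 * C) := by
        field_simp; ring
      rw [e] at h1
      rw [div_le_iff₀ (by linarith : (0:ℝ) < 4 * C)] at h1
      nlinarith
    · have h1 := hdec 1 ⟨zero_le_one, le_rfl⟩
      rw [div_le_iff₀ (by linarith : (0:ℝ) < 8 * C)]
      nlinarith

end helpers


lemma block1' {B₁ B₂ : Type*}
    [NormedAddCommGroup B₁] [NormedSpace ℝ B₁]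
    [NormedAddCommGroup B₂] [NormedSpace ℝ B₂]
    (f : B₁ × B₂ → ℝ) (Df : B₁ × B₂ → (B₁ × B₂) →L[ℝ] ℝ)
    (g₁ : B₁ → ℝ) (g₂ : B₂ → ℝ) (S₁ : Set B₁) (S₂ : Set B₂)
    (hS₁c : Convex ℝ S₁) (hS₂c : Convex ℝ S₂)
    (hg₁conv : ConvexOn ℝ S₁ g₁) (hg₂conv : ConvexOn ℝ S₂ g₂)
    (hfconv : ConvexOn ℝ (S₁ ×ˢ S₂) f)
    (hfdiff : ∀ x ∈ S₁ ×ˢ S₂, HasFDerivWithinAt f (Df x) (S₁ ×ˢ S₂) x)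
    (β₁ : ℝ) (hβ₁ : 0 < β₁) (L₁ : ℝ) (hL₁pos : 0 < L₁)
    (hdesc₁ : ∀ x₁ ∈ S₁, ∀ x₂ ∈ S₂, ∀ h₁ : B₁, x₁ + h₁ ∈ S₁ →
      f (x₁ + h₁, x₂) ≤ f (x₁, x₂) + Df (x₁, x₂) (h₁, 0) + L₁ / 2 * ‖h₁‖ ^ 2)
    (Hstar R : ℝ) (hRpos : 0 < R)
    (z w : B₁ × B₂) (hz : z ∈ S₁ ×ˢ S₂) (hw : w ∈ S₁ ×ˢ S₂)
    (hwmin : ∀ u ∈ S₁ ×ˢ S₂, objFun f g₁ g₂ w ≤ objFun f g₁ g₂ u)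
    (hHw : objFun f g₁ g₂ w = Hstar)
    (hNb : ‖z.1 - w.1‖ ^ 2 ≤ R ^ 2 / β₁)
    (hopt2 : ∀ y₂ ∈ S₂, objFun f g₁ g₂ z ≤ objFun f g₁ g₂ (z.1, y₂))
    (Hm : ℝ) (hHm : ∀ y₁ ∈ S₁, Hm ≤ objFun f g₁ g₂ (y₁, z.2)) :
    (2 * L₁ * R ^ 2 / β₁ < objFun f g₁ g₂ z - Hstar →
      1 / 2 * (objFun f g₁ g₂ z - Hstar) ≤ objFun f g₁ g₂ z - Hm) ∧
    (objFun f g₁ g₂ z - Hstar ≤ 2 * L₁ * R ^ 2 / β₁ →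
      β₁ / (4 * L₁ * R ^ 2) * (objFun f g₁ g₂ z - Hstar) ^ 2 ≤ objFun f g₁ g₂ z - Hm) := by
  have hSc : Convex ℝ (S₁ ×ˢ S₂) := hS₁c.prod hS₂c
  have hz1 : z.1 ∈ S₁ := hz.1
  have hz2 : z.2 ∈ S₂ := hz.2
  have hD0 : 0 ≤ objFun f g₁ g₂ z - Hstar := by
    have := hwmin z hz
    linarith [hHw]
  have hdf := hfdiff z hz
  have hwz : z + (w - z) ∈ S₁ ×ˢ S₂ := by simpa using hw
  have hgrad : Df z (w - z) ≤ f w - f z := by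
    have := dirDeriv_le' hSc hz hwz hdf hfconv
    simpa using this
  have hv2 : z + ((0:B₁), w.2 - z.2) ∈ S₁ ×ˢ S₂ := by
    refine ⟨by simpa using hz1, by simpa using hw.2⟩
  have hopt : g₂ z.2 - g₂ w.2 ≤ Df z (0, w.2 - z.2) := by
    refine dirDeriv_ge' hSc hz hv2 hdf ?_
    intro t ht
    have hy2 : z.2 + t • (w.2 - z.2) ∈ S₂ :=
      seg_mem' hS₂c hz2 (by simpa using hw.2) ht.1.le ht.2
    have h1 := hopt2 _ hy2
    have hcg : g₂ (z.2 + t • (w.2 - z.2)) ≤ (1 - t) * g₂ z.2 + t * g₂ w.2 := by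
      have hpt : z.2 + t • (w.2 - z.2) = (1 - t) • z.2 + t • w.2 := by module
      rw [hpt]
      simpa using hg₂conv.2 hz2 hw.2 (by linarith [ht.2] : (0:ℝ) ≤ 1 - t) ht.1.le (by ring)
    have hpt2 : z + t • ((0:B₁), w.2 - z.2) = (z.1, z.2 + t • (w.2 - z.2)) := by
      ext <;> simp
    rw [hpt2]
    simp only [objFun] at h1 ⊢
    nlinarith [h1, hcg]
  have hsplit : Df z (w - z) = Df z (w.1 - z.1, 0) + Df z (0, w.2 - z.2) := by
    rw [← map_add]
    congr 1
    ext <;> simp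
  have hDelta : objFun f g₁ g₂ z - Hstar ≤ -(Df z (w.1 - z.1, 0)) + g₁ z.1 - g₁ w.1 := by
    rw [← hHw]
    simp only [objFun]
    linarith [hgrad, hopt, hsplit]
  have hdec : ∀ t ∈ Icc (0:ℝ) 1,
      t * (objFun f g₁ g₂ z - Hstar) - (L₁ * R ^ 2 / (2 * β₁)) * t ^ 2 ≤
        objFun f g₁ g₂ z - Hm := by
    intro t ht
    have hu : z.1 + t • (w.1 - z.1) ∈ S₁ :=
      seg_mem' hS₁c hz1 (by simpa using hw.1) ht.1 ht.2
    have h1 := hHm _ hu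
    have h2 := hdesc₁ z.1 hz1 z.2 hz2 (t • (w.1 - z.1)) hu
    rw [Prod.mk.eta] at h2
    have h3 : g₁ (z.1 + t • (w.1 - z.1)) ≤ (1 - t) * g₁ z.1 + t * g₁ w.1 := by
      have hpt : z.1 + t • (w.1 - z.1) = (1 - t) • z.1 + t • w.1 := by module
      rw [hpt]
      simpa using hg₁conv.2 hz1 hw.1 (by linarith [ht.2] : (0:ℝ) ≤ 1 - t) ht.1 (by ring)
    have h4 : Df z (t • (w.1 - z.1), (0:B₂)) = t * Df z (w.1 - z.1, 0) := by
      have e : (t • (w.1 - z.1), (0:B₂)) = t • ((w.1 - z.1), (0:B₂)) := by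
        ext <;> simp
      rw [e, map_smul, smul_eq_mul]
    have h5 : ‖t • (w.1 - z.1)‖ ^ 2 = t ^ 2 * ‖w.1 - z.1‖ ^ 2 := by
      rw [norm_smul, mul_pow, Real.norm_eq_abs, sq_abs]
    rw [h4, h5] at h2
    have hA : t * (objFun f g₁ g₂ z - Hstar) ≤
        t * (-(Df z (w.1 - z.1, 0)) + g₁ z.1 - g₁ w.1) :=
      mul_le_mul_of_nonneg_left hDelta ht.1
    have hNb' : ‖w.1 - z.1‖ ^ 2 ≤ R ^ 2 / β₁ := by rwa [norm_sub_rev] at hNb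
    have hB : L₁ / 2 * (t ^ 2 * ‖w.1 - z.1‖ ^ 2) ≤ L₁ / 2 * (t ^ 2 * (R ^ 2 / β₁)) := by
      apply mul_le_mul_of_nonneg_left (mul_le_mul_of_nonneg_left hNb' (sq_nonneg t))
      linarith
    have hCeq : L₁ / 2 * (t ^ 2 * (R ^ 2 / β₁)) = L₁ * R ^ 2 / (2 * β₁) * t ^ 2 := by
      field_simp
    have hE1 : objFun f g₁ g₂ z = f z + g₁ z.1 + g₂ z.2 := rfl
    have hE2 : objFun f g₁ g₂ (z.1 + t • (w.1 - z.1), z.2) =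
        f (z.1 + t • (w.1 - z.1), z.2) + g₁ (z.1 + t • (w.1 - z.1)) + g₂ z.2 := rfl
    nlinarith [h1, h2, h3, hA, hB, hCeq, hE1, hE2]
  have hCpos : 0 < L₁ * R ^ 2 / (2 * β₁) := by positivity
  obtain ⟨c1, c2⟩ := descent_cases hCpos hD0 hdec
  have e1 : 4 * (L₁ * R ^ 2 / (2 * β₁)) = 2 * L₁ * R ^ 2 / β₁ := by
    field_simp; ring
  constructor
  · intro h
    exact c1 (by rw [e1]; exact h)
  · intro h
    have h' := c2 (by rw [e1]; exact h)
    have e2 : (objFun f g₁ g₂ z - Hstar) ^ 2 / (8 * (L₁ * R ^ 2 / (2 * β₁))) =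
        β₁ / (4 * L₁ * R ^ 2) * (objFun f g₁ g₂ z - Hstar) ^ 2 := by
      field_simp; ring
    linarith [e2 ▸ h']

lemma block2' {B₁ B₂ : Type*}
    [NormedAddCommGroup B₁] [NormedSpace ℝ B₁]
    [NormedAddCommGroup B₂] [NormedSpace ℝ B₂]
    (f : B₁ × B₂ → ℝ) (Df : B₁ × B₂ → (B₁ × B₂) →L[ℝ] ℝ)
    (g₁ : B₁ → ℝ) (g₂ : B₂ → ℝ) (S₁ : Set B₁) (S₂ : Set B₂)
    (hS₁c : Convex ℝ S₁) (hS₂c : Convex ℝ S₂)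
    (hg₁conv : ConvexOn ℝ S₁ g₁) (hg₂conv : ConvexOn ℝ S₂ g₂)
    (hfconv : ConvexOn ℝ (S₁ ×ˢ S₂) f)
    (hfdiff : ∀ x ∈ S₁ ×ˢ S₂, HasFDerivWithinAt f (Df x) (S₁ ×ˢ S₂) x)
    (β₂ : ℝ) (hβ₂ : 0 < β₂) (L₂ : ℝ) (hL₂pos : 0 < L₂)
    (hdesc₂ : ∀ x₁ ∈ S₁, ∀ x₂ ∈ S₂, ∀ h₂ : B₂, x₂ + h₂ ∈ S₂ →
      f (x₁, x₂ + h₂) ≤ f (x₁, x₂) + Df (x₁, x₂) (0, h₂) + L₂ / 2 * ‖h₂‖ ^ 2)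
    (Hstar R : ℝ) (hRpos : 0 < R)
    (z w : B₁ × B₂) (hz : z ∈ S₁ ×ˢ S₂) (hw : w ∈ S₁ ×ˢ S₂)
    (hwmin : ∀ u ∈ S₁ ×ˢ S₂, objFun f g₁ g₂ w ≤ objFun f g₁ g₂ u)
    (hHw : objFun f g₁ g₂ w = Hstar)
    (hNb : ‖z.2 - w.2‖ ^ 2 ≤ R ^ 2 / β₂)
    (hopt1 : ∀ y₁ ∈ S₁, objFun f g₁ g₂ z ≤ objFun f g₁ g₂ (y₁, z.2))
    (Hm : ℝ) (hHm : ∀ y₂ ∈ S₂, Hm ≤ objFun f g₁ g₂ (z.1, y₂)) :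
    (2 * L₂ * R ^ 2 / β₂ < objFun f g₁ g₂ z - Hstar →
      1 / 2 * (objFun f g₁ g₂ z - Hstar) ≤ objFun f g₁ g₂ z - Hm) ∧
    (objFun f g₁ g₂ z - Hstar ≤ 2 * L₂ * R ^ 2 / β₂ →
      β₂ / (4 * L₂ * R ^ 2) * (objFun f g₁ g₂ z - Hstar) ^ 2 ≤ objFun f g₁ g₂ z - Hm) := by
  have hSc : Convex ℝ (S₁ ×ˢ S₂) := hS₁c.prod hS₂c
  have hz1 : z.1 ∈ S₁ := hz.1
  have hz2 : z.2 ∈ S₂ := hz.2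
  have hD0 : 0 ≤ objFun f g₁ g₂ z - Hstar := by
    have := hwmin z hz
    linarith [hHw]
  have hdf := hfdiff z hz
  have hwz : z + (w - z) ∈ S₁ ×ˢ S₂ := by simpa using hw
  have hgrad : Df z (w - z) ≤ f w - f z := by
    have := dirDeriv_le' hSc hz hwz hdf hfconv
    simpa using this
  have hv1 : z + (w.1 - z.1, (0:B₂)) ∈ S₁ ×ˢ S₂ := by
    refine ⟨by simpa using hw.1, by simpa using hz2⟩
  have hopt : g₁ z.1 - g₁ w.1 ≤ Df z (w.1 - z.1, 0) := by
    refine dirDeriv_ge' hSc hz hv1 hdf ?_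
    intro t ht
    have hy1 : z.1 + t • (w.1 - z.1) ∈ S₁ :=
      seg_mem' hS₁c hz1 (by simpa using hw.1) ht.1.le ht.2
    have h1 := hopt1 _ hy1
    have hcg : g₁ (z.1 + t • (w.1 - z.1)) ≤ (1 - t) * g₁ z.1 + t * g₁ w.1 := by
      have hpt : z.1 + t • (w.1 - z.1) = (1 - t) • z.1 + t • w.1 := by module
      rw [hpt]
      simpa using hg₁conv.2 hz1 hw.1 (by linarith [ht.2] : (0:ℝ) ≤ 1 - t) ht.1.le (by ring)
    have hpt2 : z + t • (w.1 - z.1, (0:B₂)) = (z.1 + t • (w.1 - z.1), z.2) := by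
      ext <;> simp
    rw [hpt2]
    simp only [objFun] at h1 ⊢
    nlinarith [h1, hcg]
  have hsplit : Df z (w - z) = Df z (w.1 - z.1, 0) + Df z (0, w.2 - z.2) := by
    rw [← map_add]
    congr 1
    ext <;> simp
  have hDelta : objFun f g₁ g₂ z - Hstar ≤ -(Df z (0, w.2 - z.2)) + g₂ z.2 - g₂ w.2 := by
    rw [← hHw]
    simp only [objFun]
    linarith [hgrad, hopt, hsplit]
  have hdec : ∀ t ∈ Icc (0:ℝ) 1,
      t * (objFun f g₁ g₂ z - Hstar) - (L₂ * R ^ 2 / (2 * β₂)) * t ^ 2 ≤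
        objFun f g₁ g₂ z - Hm := by
    intro t ht
    have hu : z.2 + t • (w.2 - z.2) ∈ S₂ :=
      seg_mem' hS₂c hz2 (by simpa using hw.2) ht.1 ht.2
    have h1 := hHm _ hu
    have h2 := hdesc₂ z.1 hz1 z.2 hz2 (t • (w.2 - z.2)) hu
    rw [Prod.mk.eta] at h2
    have h3 : g₂ (z.2 + t • (w.2 - z.2)) ≤ (1 - t) * g₂ z.2 + t * g₂ w.2 := by
      have hpt : z.2 + t • (w.2 - z.2) = (1 - t) • z.2 + t • w.2 := by module
      rw [hpt]
      simpa using hg₂conv.2 hz2 hw.2 (by linarith [ht.2] : (0:ℝ) ≤ 1 - t) ht.1 (by ring)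
    have h4 : Df z ((0:B₁), t • (w.2 - z.2)) = t * Df z (0, w.2 - z.2) := by
      have e : ((0:B₁), t • (w.2 - z.2)) = t • (((0:B₁), w.2 - z.2)) := by
        ext <;> simp
      rw [e, map_smul, smul_eq_mul]
    have h5 : ‖t • (w.2 - z.2)‖ ^ 2 = t ^ 2 * ‖w.2 - z.2‖ ^ 2 := by
      rw [norm_smul, mul_pow, Real.norm_eq_abs, sq_abs]
    rw [h4, h5] at h2
    have hA : t * (objFun f g₁ g₂ z - Hstar) ≤
        t * (-(Df z (0, w.2 - z.2)) + g₂ z.2 - g₂ w.2) :=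
      mul_le_mul_of_nonneg_left hDelta ht.1
    have hNb' : ‖w.2 - z.2‖ ^ 2 ≤ R ^ 2 / β₂ := by rwa [norm_sub_rev] at hNb
    have hB : L₂ / 2 * (t ^ 2 * ‖w.2 - z.2‖ ^ 2) ≤ L₂ / 2 * (t ^ 2 * (R ^ 2 / β₂)) := by
      apply mul_le_mul_of_nonneg_left (mul_le_mul_of_nonneg_left hNb' (sq_nonneg t))
      linarith
    have hCeq : L₂ / 2 * (t ^ 2 * (R ^ 2 / β₂)) = L₂ * R ^ 2 / (2 * β₂) * t ^ 2 := by
      field_simp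
    have hE1 : objFun f g₁ g₂ z = f z + g₁ z.1 + g₂ z.2 := rfl
    have hE2 : objFun f g₁ g₂ (z.1, z.2 + t • (w.2 - z.2)) =
        f (z.1, z.2 + t • (w.2 - z.2)) + g₁ z.1 + g₂ (z.2 + t • (w.2 - z.2)) := rfl
    nlinarith [h1, h2, h3, hA, hB, hCeq, hE1, hE2]
  have hCpos : 0 < L₂ * R ^ 2 / (2 * β₂) := by positivity
  obtain ⟨c1, c2⟩ := descent_cases hCpos hD0 hdec
  have e1 : 4 * (L₂ * R ^ 2 / (2 * β₂)) = 2 * L₂ * R ^ 2 / β₂ := by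
    field_simp; ring
  constructor
  · intro h
    exact c1 (by rw [e1]; exact h)
  · intro h
    have h' := c2 (by rw [e1]; exact h)
    have e2 : (objFun f g₁ g₂ z - Hstar) ^ 2 / (8 * (L₂ * R ^ 2 / (2 * β₂))) =
        β₂ / (4 * L₂ * R ^ 2) * (objFun f g₁ g₂ z - Hstar) ^ 2 := by
      field_simp; ring
    linarith [e2 ▸ h']


/-- descent properties of the two half-steps of alternating
minimization in the plain convex case: for every `k ≥ 0`,
`H^k - H^{k+1/2} ≥ (1/2)(H^k - H*)` if `H^k - H* > 2L₁R²/β₁`, and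
`H^k - H^{k+1/2} ≥ (β₁/(4L₁R²))(H^k - H*)²` otherwise; and symmetrically
`H^{k+1/2} - H^{k+1} ≥ (1/2)(H^{k+1/2} - H*)` if `H^{k+1/2} - H* > 2L₂R²/β₂`, and
`H^{k+1/2} - H^{k+1} ≥ (β₂/(4L₂R²))(H^{k+1/2} - H*)²` otherwise, where
`H^{k+1/2} = H(x₁^{k+1}, x₂^k)`. -/
theorem stmt10
    {B₁ B₂ : Type*}
    [NormedAddCommGroup B₁] [NormedSpace ℝ B₁] [CompleteSpace B₁]
    [NormedAddCommGroup B₂] [NormedSpace ℝ B₂] [CompleteSpace B₂]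
    (f : B₁ × B₂ → ℝ) (Df : B₁ × B₂ → (B₁ × B₂) →L[ℝ] ℝ)
    (g₁ : B₁ → ℝ) (g₂ : B₂ → ℝ) (S₁ : Set B₁) (S₂ : Set B₂)
    -- (P3): g₁, g₂ proper convex, subdifferentiable on their domains
    (hS₁c : Convex ℝ S₁) (hS₂c : Convex ℝ S₂)
    (hS₁ne : S₁.Nonempty) (hS₂ne : S₂.Nonempty)
    (hg₁conv : ConvexOn ℝ S₁ g₁) (hg₂conv : ConvexOn ℝ S₂ g₂)
    (hg₁sub : ∀ x₁ ∈ S₁, ∃ d : B₁ →L[ℝ] ℝ, ∀ y₁ ∈ S₁, g₁ x₁ + d (y₁ - x₁) ≤ g₁ y₁)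
    (hg₂sub : ∀ x₂ ∈ S₂, ∃ d : B₂ →L[ℝ] ℝ, ∀ y₂ ∈ S₂, g₂ x₂ + d (y₂ - x₂) ≤ g₂ y₂)
    -- (P4): f convex and Fréchet differentiable on dom g₁ × dom g₂, with derivative Df
    (hfconv : ConvexOn ℝ (S₁ ×ˢ S₂) f)
    (hfdiff : ∀ x ∈ S₁ ×ˢ S₂, HasFDerivWithinAt f (Df x) (S₁ ×ˢ S₂) x)
    -- (P2): a norm `N` on the product space and the constants β₁, β₂
    (N : B₁ × B₂ → ℝ) (β₁ β₂ : ℝ) (hβ₁ : 0 < β₁) (hβ₂ : 0 < β₂)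
    (hNnonneg : ∀ z : B₁ × B₂, 0 ≤ N z)
    (hN₁ : ∀ z : B₁ × B₂, β₁ * ‖z.1‖ ^ 2 ≤ N z ^ 2)
    (hN₂ : ∀ z : B₁ × B₂, β₂ * ‖z.2‖ ^ 2 ≤ N z ^ 2)
    -- (P5): block Lipschitz continuity of the partial derivatives, with finite
    -- constants L₁, L₂ > 0, together with the (equivalent) block descent inequalities
    (L₁ L₂ : ℝ) (hL₁pos : 0 < L₁) (hL₂pos : 0 < L₂)
    (hlip₁ : ∀ x₁ ∈ S₁, ∀ x₂ ∈ S₂, ∀ h₁ : B₁, x₁ + h₁ ∈ S₁ →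
      ‖(Df (x₁ + h₁, x₂)).comp (ContinuousLinearMap.inl ℝ B₁ B₂) -
        (Df (x₁, x₂)).comp (ContinuousLinearMap.inl ℝ B₁ B₂)‖ ≤ L₁ * ‖h₁‖)
    (hlip₂ : ∀ x₁ ∈ S₁, ∀ x₂ ∈ S₂, ∀ h₂ : B₂, x₂ + h₂ ∈ S₂ →
      ‖(Df (x₁, x₂ + h₂)).comp (ContinuousLinearMap.inr ℝ B₁ B₂) -
        (Df (x₁, x₂)).comp (ContinuousLinearMap.inr ℝ B₁ B₂)‖ ≤ L₂ * ‖h₂‖)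
    (hdesc₁ : ∀ x₁ ∈ S₁, ∀ x₂ ∈ S₂, ∀ h₁ : B₁, x₁ + h₁ ∈ S₁ →
      f (x₁ + h₁, x₂) ≤ f (x₁, x₂) + Df (x₁, x₂) (h₁, 0) + L₁ / 2 * ‖h₁‖ ^ 2)
    (hdesc₂ : ∀ x₁ ∈ S₁, ∀ x₂ ∈ S₂, ∀ h₂ : B₂, x₂ + h₂ ∈ S₂ →
      f (x₁, x₂ + h₂) ≤ f (x₁, x₂) + Df (x₁, x₂) (0, h₂) + L₂ / 2 * ‖h₂‖ ^ 2)
    -- (P6): nonempty optimal set X with optimal value H*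
    (X : Set (B₁ × B₂))
    (hX : X = {y ∈ S₁ ×ˢ S₂ | ∀ z ∈ S₁ ×ˢ S₂, objFun f g₁ g₂ y ≤ objFun f g₁ g₂ z})
    (hXne : X.Nonempty)
    (Hstar : ℝ) (hHstar : ∀ y ∈ X, objFun f g₁ g₂ y = Hstar)
    -- projections onto X with respect to N
    (proj : B₁ × B₂ → B₁ × B₂)
    (hproj : ∀ z ∈ S₁ ×ˢ S₂, proj z ∈ X ∧ ∀ y ∈ X, N (z - proj z) ≤ N (z - y))
    -- (P8c): g₁, g₂ closed (lower semicontinuous), compact level set, diameter R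
    (hg₁lsc : LowerSemicontinuousOn g₁ S₁) (hg₂lsc : LowerSemicontinuousOn g₂ S₂)
    (hS₁cl : IsClosed S₁) (hS₂cl : IsClosed S₂)
    -- the alternating minimization sequence
    (x : ℕ → B₁ × B₂)
    (hx0 : x 0 ∈ S₁ ×ˢ S₂)
    (hinit : ∀ y₂ ∈ S₂, objFun f g₁ g₂ (x 0) ≤ objFun f g₁ g₂ ((x 0).1, y₂))
    (hstep1 : ∀ k : ℕ, (x (k + 1)).1 ∈ S₁ ∧ ∀ y₁ ∈ S₁,
      objFun f g₁ g₂ ((x (k + 1)).1, (x k).2) ≤ objFun f g₁ g₂ (y₁, (x k).2))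
    (hstep2 : ∀ k : ℕ, (x (k + 1)).2 ∈ S₂ ∧ ∀ y₂ ∈ S₂,
      objFun f g₁ g₂ (x (k + 1)) ≤ objFun f g₁ g₂ ((x (k + 1)).1, y₂))
    -- compactness of the level set of H at x⁰ and its diameter R relative to X
    (hcomp : IsCompact {z ∈ S₁ ×ˢ S₂ | objFun f g₁ g₂ z ≤ objFun f g₁ g₂ (x 0)})
    (R : ℝ) (hRpos : 0 < R)
    (hR : ∀ z ∈ S₁ ×ˢ S₂, objFun f g₁ g₂ z ≤ objFun f g₁ g₂ (x 0) →
      ∀ y ∈ X, N (z - y) ≤ R)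
    :
    ∀ k : ℕ,
      (2 * L₁ * R ^ 2 / β₁ < objFun f g₁ g₂ (x k) - Hstar →
        1 / 2 * (objFun f g₁ g₂ (x k) - Hstar) ≤
          objFun f g₁ g₂ (x k) - objFun f g₁ g₂ ((x (k + 1)).1, (x k).2)) ∧
      (objFun f g₁ g₂ (x k) - Hstar ≤ 2 * L₁ * R ^ 2 / β₁ →
        β₁ / (4 * L₁ * R ^ 2) * (objFun f g₁ g₂ (x k) - Hstar) ^ 2 ≤
          objFun f g₁ g₂ (x k) - objFun f g₁ g₂ ((x (k + 1)).1, (x k).2)) ∧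
      (2 * L₂ * R ^ 2 / β₂ < objFun f g₁ g₂ ((x (k + 1)).1, (x k).2) - Hstar →
        1 / 2 * (objFun f g₁ g₂ ((x (k + 1)).1, (x k).2) - Hstar) ≤
          objFun f g₁ g₂ ((x (k + 1)).1, (x k).2) - objFun f g₁ g₂ (x (k + 1))) ∧
      (objFun f g₁ g₂ ((x (k + 1)).1, (x k).2) - Hstar ≤ 2 * L₂ * R ^ 2 / β₂ →
        β₂ / (4 * L₂ * R ^ 2) * (objFun f g₁ g₂ ((x (k + 1)).1, (x k).2) - Hstar) ^ 2 ≤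
          objFun f g₁ g₂ ((x (k + 1)).1, (x k).2) - objFun f g₁ g₂ (x (k + 1))) := by
  intro k
  have hmem : ∀ n, x n ∈ S₁ ×ˢ S₂ := by
    intro n
    cases n with
    | zero => exact hx0
    | succ n => exact Set.mem_prod.2 ⟨(hstep1 n).1, (hstep2 n).1⟩
  have hhalf_le : ∀ n, objFun f g₁ g₂ ((x (n+1)).1, (x n).2) ≤ objFun f g₁ g₂ (x n) := by
    intro n
    have h := (hstep1 n).2 (x n).1 (hmem n).1
    rwa [Prod.mk.eta] at h
  have hnext_le : ∀ n, objFun f g₁ g₂ (x (n+1)) ≤ objFun f g₁ g₂ ((x (n+1)).1, (x n).2) :=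
    fun n => (hstep2 n).2 (x n).2 (hmem n).2
  have hlev : ∀ n, objFun f g₁ g₂ (x n) ≤ objFun f g₁ g₂ (x 0) := by
    intro n
    induction n with
    | zero => exact le_rfl
    | succ n ih => exact le_trans (le_trans (hnext_le n) (hhalf_le n)) ih
  have hopt2 : ∀ y₂ ∈ S₂, objFun f g₁ g₂ (x k) ≤ objFun f g₁ g₂ ((x k).1, y₂) := by
    cases k with
    | zero => exact hinit
    | succ n => exact (hstep2 n).2
  have hXfact : ∀ y ∈ X, y ∈ S₁ ×ˢ S₂ ∧
      ∀ u ∈ S₁ ×ˢ S₂, objFun f g₁ g₂ y ≤ objFun f g₁ g₂ u := by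
    intro y hy
    rw [hX] at hy
    exact ⟨hy.1, hy.2⟩
  have hz := hmem k
  obtain ⟨hwX, -⟩ := hproj (x k) hz
  obtain ⟨hwS, hwmin⟩ := hXfact _ hwX
  have hNb1 : ‖(x k).1 - (proj (x k)).1‖ ^ 2 ≤ R ^ 2 / β₁ := by
    have h1 := hN₁ (x k - proj (x k))
    have h2 := hR (x k) hz (hlev k) _ hwX
    have h3 := hNnonneg (x k - proj (x k))
    rw [le_div_iff₀ hβ₁]
    have he : ((x k) - proj (x k)).1 = (x k).1 - (proj (x k)).1 := rfl
    rw [he] at h1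
    nlinarith
  have K1 := block1' f Df g₁ g₂ S₁ S₂ hS₁c hS₂c hg₁conv hg₂conv hfconv hfdiff
    β₁ hβ₁ L₁ hL₁pos hdesc₁ Hstar R hRpos (x k) (proj (x k)) hz hwS hwmin
    (hHstar _ hwX) hNb1 hopt2 (objFun f g₁ g₂ ((x (k+1)).1, (x k).2)) (hstep1 k).2
  have hz' : ((x (k+1)).1, (x k).2) ∈ S₁ ×ˢ S₂ := ⟨(hstep1 k).1, (hmem k).2⟩
  have hlev' : objFun f g₁ g₂ ((x (k+1)).1, (x k).2) ≤ objFun f g₁ g₂ (x 0) :=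
    le_trans (hhalf_le k) (hlev k)
  obtain ⟨hwX', -⟩ := hproj _ hz'
  obtain ⟨hwS', hwmin'⟩ := hXfact _ hwX'
  have hNb2 : ‖((x (k+1)).1, (x k).2).2 - (proj ((x (k+1)).1, (x k).2)).2‖ ^ 2 ≤
      R ^ 2 / β₂ := by
    have h1 := hN₂ (((x (k+1)).1, (x k).2) - proj ((x (k+1)).1, (x k).2))
    have h2 := hR _ hz' hlev' _ hwX'
    have h3 := hNnonneg (((x (k+1)).1, (x k).2) - proj ((x (k+1)).1, (x k).2))
    rw [le_div_iff₀ hβ₂]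
    have he : ((((x (k+1)).1, (x k).2)) - proj ((x (k+1)).1, (x k).2)).2 =
        (((x (k+1)).1, (x k).2)).2 - (proj ((x (k+1)).1, (x k).2)).2 := rfl
    rw [he] at h1
    nlinarith
  have hopt1' : ∀ y₁ ∈ S₁, objFun f g₁ g₂ ((x (k+1)).1, (x k).2) ≤
      objFun f g₁ g₂ (y₁, ((x (k+1)).1, (x k).2).2) := (hstep1 k).2
  have hHm2 : ∀ y₂ ∈ S₂, objFun f g₁ g₂ (x (k+1)) ≤
      objFun f g₁ g₂ ((((x (k+1)).1, (x k).2)).1, y₂) := (hstep2 k).2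
  have K2 := block2' f Df g₁ g₂ S₁ S₂ hS₁c hS₂c hg₁conv hg₂conv hfconv hfdiff
    β₂ hβ₂ L₂ hL₂pos hdesc₂ Hstar R hRpos ((x (k+1)).1, (x k).2)
    (proj ((x (k+1)).1, (x k).2)) hz' hwS' hwmin' (hHstar _ hwX') hNb2 hopt1'
    (objFun f g₁ g₂ (x (k+1))) hHm2
  exact ⟨K1.1, K1.2, K2.1, K2.2⟩
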